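/- For the ideal conv on ℚ ∩ [0,1] generated by convergent sequences, and for every function f : ℚ∩[0,1] → ω² with all fibers f⁻¹[{(i,j)}] ∈ conv, there exists a set A ∉ conv such that f restricted to A is finite-to-one and f[A] ∈ Fin⊗Fin. -/

import Mathlib

open Set

/-- The ideal `Fin ⊗ Fin` on `ω²`: sets all but finitely many of whose
vertical sections are finite. -/
def FinFin : Set (Set (ℕ × ℕ)) :=
  {A | {n : ℕ | ¬ ({m : ℕ | (n, m) ∈ A}).Finite}.Finite}

/-- The `i`-th section of a subset of `ω³`. -/
def BIsec (i : ℕ) (A : Set (ℕ × ℕ × ℕ)) : Set (ℕ × ℕ) := {p | (i, p) ∈ A}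

/-- The ideal `BI` on `ω³`. -/
def BI : Set (Set (ℕ × ℕ × ℕ)) :=
  {A | ∃ k : ℕ, (∀ i < k, BIsec i A ∈ FinFin) ∧ ∀ i ≥ k, (BIsec i A).Finite}

/-- `I` is an ideal on `X`: contains all finite sets, closed under subsets and
finite unions, and proper. -/
def IsIdeal {X : Type*} (I : Set (Set X)) : Prop :=
  (∀ A : Set X, A.Finite → A ∈ I) ∧
  (∀ A B : Set X, A ∈ I → B ⊆ A → B ∈ I) ∧
  (∀ A B : Set X, A ∈ I → B ∈ I → A ∪ B ∈ I) ∧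
  (Set.univ : Set X) ∉ I

/-- The rationals of the unit interval. -/
abbrev Q01 : Type := {q : ℚ // q ∈ Set.Icc (0 : ℚ) 1}

/-- The ideal `conv` on `ℚ ∩ [0,1]`: sets with only finitely many
accumulation points in `[0,1]` (equivalently in `ℝ`). -/
def convIdeal : Set (Set Q01) :=
  {A | {x : ℝ | AccPt x (Filter.principal ((fun q : Q01 => (q.1 : ℝ)) '' A))}.Finite}

namespace Stmt5Aux

open Filter

/-- Abbreviation for the real image of a set of rationals in `[0,1]`. -/
noncomputable def img (M : Set Q01) : Set ℝ := (fun q : Q01 => (q.1 : ℝ)) '' M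

lemma acc_to_pts {M : Set Q01} {x : ℝ} (hM : AccPt x (𝓟 (img M)))
    {ε : ℝ} (hε : 0 < ε) : ∃ q ∈ M, (q.1 : ℝ) ≠ x ∧ |(q.1 : ℝ) - x| < ε := by
  rw [accPt_iff_nhds] at hM
  obtain ⟨y, ⟨hyU, q, hqM, rfl⟩, hyx⟩ := hM (Metric.ball x ε) (Metric.ball_mem_nhds x hε)
  exact ⟨q, hqM, hyx, by simpa [Real.dist_eq] using hyU⟩

lemma pts_to_acc {M : Set Q01} {x : ℝ}
    (hM : ∀ ε : ℝ, 0 < ε → ∃ q ∈ M, (q.1 : ℝ) ≠ x ∧ |(q.1 : ℝ) - x| < ε) :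
    AccPt x (𝓟 (img M)) := by
  rw [accPt_iff_nhds]
  intro U hU
  obtain ⟨ε, hε, hball⟩ := Metric.mem_nhds_iff.mp hU
  obtain ⟨q, hq, hne, hlt⟩ := hM ε hε
  exact ⟨(q.1 : ℝ), ⟨hball (by simpa [Real.dist_eq] using hlt), ⟨q, hq, rfl⟩⟩, hne⟩

lemma q01_dense {x : ℝ} (hx : x ∈ Set.Icc (0 : ℝ) 1) {ε : ℝ} (hε : 0 < ε) :
    ∃ q : Q01, (q.1 : ℝ) ≠ x ∧ |(q.1 : ℝ) - x| < ε := by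
  obtain ⟨hx0, hx1⟩ := hx
  rcases lt_or_eq_of_le hx1 with h1 | h1
  · have hlt : x < min 1 (x + ε) := lt_min h1 (by linarith)
    obtain ⟨q, hq1, hq2⟩ := exists_rat_btwn hlt
    have hq2' : (q : ℝ) < 1 := lt_of_lt_of_le hq2 (min_le_left _ _)
    have hq2'' : (q : ℝ) < x + ε := lt_of_lt_of_le hq2 (min_le_right _ _)
    have hq0 : (0 : ℚ) ≤ q := by exact_mod_cast le_of_lt (lt_of_le_of_lt hx0 hq1)
    have hqle : q ≤ (1 : ℚ) := by exact_mod_cast le_of_lt hq2'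
    refine ⟨⟨q, Set.mem_Icc.mpr ⟨hq0, hqle⟩⟩, ne_of_gt hq1, ?_⟩
    rw [abs_lt]; constructor <;> simp at * <;> linarith
  · have hlt : max 0 (x - ε) < x := max_lt (by linarith) (by linarith)
    obtain ⟨q, hq1, hq2⟩ := exists_rat_btwn hlt
    have hq1' : (0 : ℝ) < q := lt_of_le_of_lt (le_max_left _ _) hq1
    have hq1'' : x - ε < (q : ℝ) := lt_of_le_of_lt (le_max_right _ _) hq1
    have hq0 : (0 : ℚ) ≤ q := by exact_mod_cast le_of_lt hq1'
    have hqle : q ≤ (1 : ℚ) := by exact_mod_cast le_of_lt (lt_of_lt_of_le hq2 hx1)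
    refine ⟨⟨q, Set.mem_Icc.mpr ⟨hq0, hqle⟩⟩, ne_of_lt hq2, ?_⟩
    rw [abs_lt]; constructor <;> simp at * <;> linarith

lemma notAcc_union {x : ℝ} {A B : Set ℝ} (hA : ¬ AccPt x (𝓟 A)) (hB : ¬ AccPt x (𝓟 B)) :
    ¬ AccPt x (𝓟 (A ∪ B)) := by
  rw [← Filter.sup_principal, accPt_sup]
  tauto

lemma notAcc_empty {x : ℝ} : ¬ AccPt x (𝓟 (∅ : Set ℝ)) := by
  rw [Filter.principal_empty]
  intro h
  exact h.ne (by simp)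

lemma notAcc_biUnion {x : ℝ} {I : Finset ℕ} {T : ℕ → Set ℝ}
    (hT : ∀ i ∈ I, ¬ AccPt x (𝓟 (T i))) : ¬ AccPt x (𝓟 (⋃ i ∈ I, T i)) := by
  induction I using Finset.induction with
  | empty => simpa using notAcc_empty
  | @insert a s ha ih =>
      rw [Finset.set_biUnion_insert]
      exact notAcc_union (hT a (Finset.mem_insert_self a s))
        (ih fun i hi => hT i (Finset.mem_insert_of_mem hi))

lemma notAcc_subset {x : ℝ} {A B : Set ℝ} (hB : ¬ AccPt x (𝓟 B)) (hAB : A ⊆ B) :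
    ¬ AccPt x (𝓟 A) := fun h => hB (h.mono (Filter.principal_mono.mpr hAB))

/-- The main recursive construction. -/
lemma construct (S : Set Q01) (h : Q01 → ℕ) (x : ℕ → ℝ) (hx : Function.Injective x)
    (H : ∀ (k : ℕ) (F : Finset ℕ), AccPt (x k) (𝓟 (img {q | q ∈ S ∧ h q ∉ F}))) :
    ∃ a : ℕ → Q01, (∀ t, a t ∈ S) ∧ (∀ s t : ℕ, h (a s) = h (a t) → s = t) ∧
      Set.range a ∉ convIdeal := by
  have hpos : ∀ t : ℕ, (0 : ℝ) < 1 / ((Nat.unpair t).2 + 1) := by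
    intro t; positivity
  have hpick : ∀ (t : ℕ) (F : Finset ℕ), ∃ q : Q01, q ∈ S ∧ h q ∉ F ∧
      (q.1 : ℝ) ≠ x (Nat.unpair t).1 ∧
      |(q.1 : ℝ) - x (Nat.unpair t).1| < 1 / ((Nat.unpair t).2 + 1) := by
    intro t F
    obtain ⟨q, hq, hne, hlt⟩ := acc_to_pts (H (Nat.unpair t).1 F) (hpos t)
    exact ⟨q, hq.1, hq.2, hne, hlt⟩
  let pick : ℕ → Finset ℕ → Q01 := fun t F => (hpick t F).choose
  let u : ℕ → Finset ℕ := fun t => Nat.rec ∅ (fun t' F => insert (h (pick t' F)) F) t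
  let a : ℕ → Q01 := fun t => pick t (u t)
  have hspec : ∀ t, a t ∈ S ∧ h (a t) ∉ u t ∧ ((a t).1 : ℝ) ≠ x (Nat.unpair t).1 ∧
      |((a t).1 : ℝ) - x (Nat.unpair t).1| < 1 / ((Nat.unpair t).2 + 1) :=
    fun t => (hpick t (u t)).choose_spec
  have husucc : ∀ t, u (t + 1) = insert (h (a t)) (u t) := fun t => rfl
  have humono : ∀ s t : ℕ, s ≤ t → u s ⊆ u t := by
    intro s t hst
    induction t with
    | zero => simp [Nat.le_zero.mp hst]
    | succ t ih =>
        rcases Nat.lt_or_ge s (t + 1) with hlt | hge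
        · exact (ih (Nat.lt_succ_iff.mp hlt)).trans (by rw [husucc]; exact Finset.subset_insert _ _)
        · have : s = t + 1 := le_antisymm hst hge
          simp [this]
  have hinj : ∀ s t : ℕ, s < t → h (a s) ≠ h (a t) := by
    intro s t hst heq
    have h1 : h (a s) ∈ u (s + 1) := by rw [husucc]; exact Finset.mem_insert_self _ _
    have h2 : h (a s) ∈ u t := humono (s + 1) t hst h1
    exact (hspec t).2.1 (heq ▸ h2)
  refine ⟨a, fun t => (hspec t).1, ?_, ?_⟩
  · intro s t heq
    rcases lt_trichotomy s t with hlt | heq' | hlt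
    · exact absurd heq (hinj s t hlt)
    · exact heq'
    · exact absurd heq.symm (hinj t s hlt)
  · intro hconv
    have hacc : ∀ k : ℕ, AccPt (x k) (𝓟 (img (Set.range a))) := by
      intro k
      apply pts_to_acc
      intro ε hε
      obtain ⟨n, hn⟩ := exists_nat_one_div_lt hε
      refine ⟨a (Nat.pair k n), Set.mem_range_self _, ?_, ?_⟩
      · have := (hspec (Nat.pair k n)).2.2.1
        rwa [Nat.unpair_pair] at this
      · have := (hspec (Nat.pair k n)).2.2.2
        rw [Nat.unpair_pair] at this
        exact lt_trans this hn
    have : {y : ℝ | AccPt y (𝓟 (img (Set.range a)))}.Infinite :=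
      Set.infinite_of_injective_forall_mem hx (fun k => hacc k)
    exact this hconv

end Stmt5Aux

open Stmt5Aux Filter in
theorem stmt_5 : ∀ f : Q01 → ℕ × ℕ, (∀ p : ℕ × ℕ, f ⁻¹' {p} ∈ convIdeal) →
    ∃ A : Set Q01, A ∉ convIdeal ∧ (∀ p : ℕ × ℕ, (A ∩ f ⁻¹' {p}).Finite) ∧
      f '' A ∈ FinFin := by
  classical
  intro f hf
  set GoodCol : ℕ → Set ℝ := fun i =>
    {x : ℝ | ∀ F : Finset ℕ, AccPt x (𝓟 (img {q | (f q).1 = i ∧ (f q).2 ∉ F}))} with hGC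
  by_cases hcase : ∃ i : ℕ, (GoodCol i).Infinite
  · -- Case A : concentrate in column i
    obtain ⟨i, hinf⟩ := hcase
    let e := hinf.natEmbedding
    have hxinj : Function.Injective (fun k => ((e k : ↥(GoodCol i)) : ℝ)) :=
      Subtype.val_injective.comp e.injective
    obtain ⟨a, haS, hainj, hnotconv⟩ := construct {q | (f q).1 = i} (fun q => (f q).2)
      (fun k => ((e k : ↥(GoodCol i)) : ℝ)) hxinj
      (by intro k F; exact (e k).2 F)
    refine ⟨Set.range a, hnotconv, ?_, ?_⟩
    · intro p
      apply Set.Subsingleton.finite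
      rintro q1 ⟨⟨s, rfl⟩, hq1⟩ q2 ⟨⟨t, rfl⟩, hq2⟩
      have h1 : f (a s) = p := hq1
      have h2 : f (a t) = p := hq2
      have : s = t := hainj s t (by rw [h1, h2])
      rw [this]
    · show {n : ℕ | ¬ ({m : ℕ | (n, m) ∈ f '' Set.range a}).Finite}.Finite
      apply Set.Finite.subset (Set.finite_singleton i)
      intro n hn
      simp only [Set.mem_setOf_eq] at hn
      rw [Set.mem_singleton_iff]
      by_contra hne
      apply hn
      convert Set.finite_empty
      ext m
      simp only [Set.mem_setOf_eq, Set.mem_empty_iff_false, iff_false]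
      rintro ⟨q, ⟨t, rfl⟩, hfq⟩
      exact hne ((congrArg Prod.fst hfq).symm.trans (haS t))
  · -- Case B : all columns are bad; choose fresh columns
    push_neg at hcase
    have hGCfin : ∀ i, (GoodCol i).Finite := fun i => hcase i
    set Bad : Set ℝ := (⋃ i : ℕ, GoodCol i) ∪
      (⋃ p : ℕ × ℕ, {y : ℝ | AccPt y (𝓟 (img (f ⁻¹' {p})))}) with hBad
    have hBadc : Bad.Countable := by
      apply Set.Countable.union
      · exact Set.countable_iUnion fun i => (hGCfin i).countable
      · exact Set.countable_iUnion fun p => (hf p).countable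
    have hGoodinf : (Set.Icc (0 : ℝ) 1 \ Bad).Infinite := by
      intro hfin
      have hsub : Set.Icc (0 : ℝ) 1 ⊆ (Set.Icc (0 : ℝ) 1 \ Bad) ∪ Bad := by
        intro y hy
        by_cases hyB : y ∈ Bad
        · exact Or.inr hyB
        · exact Or.inl ⟨hy, hyB⟩
      have hcnt : (Set.Icc (0 : ℝ) 1).Countable :=
        Set.Countable.mono hsub (hfin.countable.union hBadc)
      have : (Cardinal.mk (Set.Icc (0 : ℝ) 1)) ≤ Cardinal.aleph0 :=
        (Cardinal.mk_le_aleph0_iff).mpr hcnt.to_subtype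
      rw [Cardinal.mk_Icc_real (by norm_num : (0:ℝ) < 1)] at this
      exact absurd this (not_le.mpr Cardinal.aleph0_lt_continuum)
    let e := hGoodinf.natEmbedding
    have hxinj : Function.Injective (fun k => ((e k : ↥(Set.Icc (0:ℝ) 1 \ Bad)) : ℝ)) :=
      Subtype.val_injective.comp e.injective
    have hH : ∀ (k : ℕ) (F : Finset ℕ), AccPt ((e k : ↥(Set.Icc (0:ℝ) 1 \ Bad)) : ℝ)
        (𝓟 (img {q | q ∈ Set.univ ∧ (f q).1 ∉ F})) := by
      intro k F
      obtain ⟨hyI, hyB⟩ := (e k).2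
      set y : ℝ := ((e k : ↥(Set.Icc (0:ℝ) 1 \ Bad)) : ℝ) with hy
      have hyGC : ∀ i, y ∉ GoodCol i := fun i hmem =>
        hyB (Or.inl (Set.mem_iUnion.mpr ⟨i, hmem⟩))
      have hyfib : ∀ p : ℕ × ℕ, ¬ AccPt y (𝓟 (img (f ⁻¹' {p}))) := fun p hmem =>
        hyB (Or.inr (Set.mem_iUnion.mpr ⟨p, hmem⟩))
      -- no single column accumulates at y
      have hcol : ∀ i : ℕ, ¬ AccPt y (𝓟 (img {q | (f q).1 = i})) := by
        intro i
        have hnotGC : ∃ Fi : Finset ℕ,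
            ¬ AccPt y (𝓟 (img {q | (f q).1 = i ∧ (f q).2 ∉ Fi})) := by
          by_contra hcon
          push_neg at hcon
          exact hyGC i hcon
        obtain ⟨Fi, hFi⟩ := hnotGC
        have hdecomp : {q : Q01 | (f q).1 = i} ⊆
            {q | (f q).1 = i ∧ (f q).2 ∉ Fi} ∪ ⋃ j ∈ Fi, f ⁻¹' {(i, j)} := by
          intro q hq
          by_cases hj : (f q).2 ∈ Fi
          · refine Or.inr (Set.mem_biUnion hj ?_)
            simp only [Set.mem_preimage, Set.mem_singleton_iff]
            exact Prod.ext hq rfl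
          · exact Or.inl ⟨hq, hj⟩
        apply notAcc_subset _ (Set.image_mono hdecomp)
        rw [Set.image_union]
        apply notAcc_union hFi
        have himg : (fun q : Q01 => (q.1 : ℝ)) '' (⋃ j ∈ Fi, f ⁻¹' {(i, j)}) ⊆
            ⋃ j ∈ Fi, img (f ⁻¹' {(i, j)}) := by
          rintro z ⟨q, hq, rfl⟩
          obtain ⟨j, hjFi, hqj⟩ := Set.mem_iUnion₂.mp hq
          exact Set.mem_biUnion hjFi ⟨q, hqj, rfl⟩
        apply notAcc_subset _ himg
        exact notAcc_biUnion fun j _ => hyfib (i, j)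
      -- the whole space accumulates at y
      have huniv : AccPt y (𝓟 (img (Set.univ : Set Q01))) := by
        apply pts_to_acc
        intro ε hε
        obtain ⟨q, hne, hlt⟩ := q01_dense hyI hε
        exact ⟨q, Set.mem_univ q, hne, hlt⟩
      -- split
      have hsplit : (Set.univ : Set Q01) ⊆
          {q | q ∈ Set.univ ∧ (f q).1 ∉ F} ∪ ⋃ i ∈ F, {q : Q01 | (f q).1 = i} := by
        intro q _
        by_cases hi : (f q).1 ∈ F
        · exact Or.inr (Set.mem_biUnion hi rfl)
        · exact Or.inl ⟨trivial, hi⟩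
      have hspl := huniv.mono (Filter.principal_mono.mpr (Set.image_mono hsplit))
      rw [Set.image_union, ← Filter.sup_principal, accPt_sup] at hspl
      rcases hspl with hgood | hbad
      · exact hgood
      · exfalso
        have himg : (fun q : Q01 => (q.1 : ℝ)) '' (⋃ i ∈ F, {q : Q01 | (f q).1 = i}) ⊆
            ⋃ i ∈ F, img {q : Q01 | (f q).1 = i} := by
          rintro z ⟨q, hq, rfl⟩
          obtain ⟨i, hiF, hqi⟩ := Set.mem_iUnion₂.mp hq
          exact Set.mem_biUnion hiF ⟨q, hqi, rfl⟩
        exact (notAcc_subset (notAcc_biUnion fun i _ => hcol i) himg) hbad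
    obtain ⟨a, haS, hainj, hnotconv⟩ := construct Set.univ (fun q => (f q).1)
      (fun k => ((e k : ↥(Set.Icc (0:ℝ) 1 \ Bad)) : ℝ)) hxinj hH
    refine ⟨Set.range a, hnotconv, ?_, ?_⟩
    · intro p
      apply Set.Subsingleton.finite
      rintro q1 ⟨⟨s, rfl⟩, hq1⟩ q2 ⟨⟨t, rfl⟩, hq2⟩
      have h1 : f (a s) = p := hq1
      have h2 : f (a t) = p := hq2
      have : s = t := hainj s t (by rw [h1, h2])
      rw [this]
    · show {n : ℕ | ¬ ({m : ℕ | (n, m) ∈ f '' Set.range a}).Finite}.Finite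
      convert Set.finite_empty
      ext n
      simp only [Set.mem_setOf_eq, Set.mem_empty_iff_false, iff_false, not_not]
      apply Set.Subsingleton.finite
      rintro m1 hm1 m2 hm2
      obtain ⟨q1, ⟨s, rfl⟩, hfq1⟩ := hm1
      obtain ⟨q2, ⟨t, rfl⟩, hfq2⟩ := hm2
      have : s = t := hainj s t (by
        show (f (a s)).1 = (f (a t)).1
        rw [hfq1, hfq2])
      rw [this] at hfq1
      exact (Prod.ext_iff.mp (hfq1.symm.trans hfq2)).2
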